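/- Let D be a diagram, i_1 ≠ i_2 two row indices, and D^A the diagram obtained from D by moving boxes from row i_1 to row i_2 within their columns where possible, with φ the induced column-preserving bijection from the boxes of D to the boxes of D^A and all elements associated to D^A regarded in ℂ[Σ_D] via φ. Then for every σ ∈ R_D with σ ∉ R_{D^A}, the product C(D)·σ·R(D^A) equals 0 in ℂ[Σ_D]. -/

import Mathlib

/-- A diagram: a finite set of boxes `(i, j)`. -/
abbrev Dg := Finset (ℕ × ℕ)

/-- The sum `Σ σ` over all permutations preserving the value of `g` (e.g. the row or the
column of every box), in the group algebra `ℂ[Perm α]`. -/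
noncomputable def Rsum {α : Type} [Fintype α] [DecidableEq α] (g : α → ℕ) :
    MonoidAlgebra ℂ (Equiv.Perm α) :=
  ∑ σ ∈ Finset.univ.filter (fun σ : Equiv.Perm α => ∀ b, g (σ b) = g b),
    MonoidAlgebra.single σ 1

/-- The signed sum `Σ sgn(σ)·σ` over all permutations preserving the value of `g`, in the
group algebra `ℂ[Perm α]`. -/
noncomputable def Csum {α : Type} [Fintype α] [DecidableEq α] (g : α → ℕ) :
    MonoidAlgebra ℂ (Equiv.Perm α) :=
  ∑ σ ∈ Finset.univ.filter (fun σ : Equiv.Perm α => ∀ b, g (σ b) = g b),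
    MonoidAlgebra.single σ ((Equiv.Perm.sign σ : ℤ) : ℂ)

lemma swap_pres {α β : Type*} [DecidableEq α] (g : α → β) (u v : α) (h : g u = g v)
    (x : α) : g (Equiv.swap u v x) = g x := by
  rcases eq_or_ne x u with rfl | hu
  · rw [Equiv.swap_apply_left, h]
  rcases eq_or_ne x v with rfl | hv
  · rw [Equiv.swap_apply_right, h]
  · rw [Equiv.swap_apply_of_ne_of_ne hu hv]

lemma single_mul_Rsum {α : Type} [Fintype α] [DecidableEq α] (g : α → ℕ)
    (t : Equiv.Perm α) (ht : ∀ b, g (t b) = g b) :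
    MonoidAlgebra.single t (1 : ℂ) * Rsum g = Rsum g := by
  unfold Rsum
  rw [Finset.mul_sum]
  refine Finset.sum_equiv (Equiv.mulLeft t) ?_ ?_
  · intro τ
    simp only [Finset.mem_filter, Finset.mem_univ, true_and, Equiv.coe_mulLeft,
      Equiv.Perm.mul_apply]
    constructor
    · intro h b; rw [ht]; exact h b
    · intro h b
      have h1 := h b
      rw [ht] at h1
      exact h1
  · intro τ hτ
    rw [MonoidAlgebra.single_mul_single, one_mul]
    rfl

lemma Csum_mul_single {α : Type} [Fintype α] [DecidableEq α] (g : α → ℕ)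
    (t : Equiv.Perm α) (ht : ∀ b, g (t b) = g b) :
    Csum g * MonoidAlgebra.single t (((Equiv.Perm.sign t : ℤ) : ℂ)) = Csum g := by
  unfold Csum
  rw [Finset.sum_mul]
  refine Finset.sum_equiv (Equiv.mulRight t) ?_ ?_
  · intro τ
    simp only [Finset.mem_filter, Finset.mem_univ, true_and, Equiv.coe_mulRight,
      Equiv.Perm.mul_apply]
    constructor
    · intro h b; rw [h, ht]
    · intro h b
      have h1 := h (t⁻¹ b)
      rw [show t (t⁻¹ b) = b from t.apply_symm_apply b] at h1
      have h2 : g (t (t⁻¹ b)) = g (t⁻¹ b) := ht _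
      rw [show t (t⁻¹ b) = b from t.apply_symm_apply b] at h2
      rw [h1, ← h2]
  · intro τ hτ
    rw [MonoidAlgebra.single_mul_single]
    have hs : Equiv.Perm.sign (τ * t) = Equiv.Perm.sign τ * Equiv.Perm.sign t :=
      Equiv.Perm.sign_mul τ t
    simp only [Equiv.coe_mulRight]
    congr 1
    rw [hs]
    push_cast
    ring

/-- With `D^A` obtained from `D` by moving boxes from row `i1` to row
`i2` where possible and `φ` the canonical column-preserving bijection, for every
`σ ∈ R_D \ R_{D^A}` we have `C(D) · σ · R(D^A) = 0` in `ℂ[Σ_D]`. -/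
theorem statement11 (D DA : Dg) (i1 i2 : ℕ) (h12 : i1 ≠ i2)
    (hDA1 : ∀ p q : ℕ, p ≠ i1 → p ≠ i2 → ((p, q) ∈ DA ↔ (p, q) ∈ D))
    (hDA2 : ∀ q : ℕ, (i1, q) ∈ DA ↔ ((i1, q) ∈ D ∧ (i2, q) ∈ D))
    (hDA3 : ∀ q : ℕ, (i2, q) ∈ DA ↔ ((i1, q) ∈ D ∨ (i2, q) ∈ D))
    (φ : {x : ℕ × ℕ // x ∈ D} ≃ {x : ℕ × ℕ // x ∈ DA})
    (hφ : ∀ b : {x : ℕ × ℕ // x ∈ D},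
      (φ b).val = if b.val.1 = i1 ∧ (i2, b.val.2) ∉ D then (i2, b.val.2) else b.val)
    (σ : Equiv.Perm {x : ℕ × ℕ // x ∈ D})
    (hσR : ∀ b, (σ b).val.1 = b.val.1)
    (hσRA : ¬ ∀ b, (φ (σ b)).val.1 = (φ b).val.1) :
    Csum (fun b : {x : ℕ × ℕ // x ∈ D} => b.val.2) * MonoidAlgebra.single σ (1 : ℂ) *
      Rsum (fun b : {x : ℕ × ℕ // x ∈ D} => (φ b).val.1) = 0 := by
  classical
  -- row of φ b
  have hrow : ∀ b : {x : ℕ × ℕ // x ∈ D}, (φ b).val.1 =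
      if b.val.1 = i1 ∧ (i2, b.val.2) ∉ D then i2 else b.val.1 := by
    intro b
    rw [hφ b]
    by_cases h : b.val.1 = i1 ∧ (i2, b.val.2) ∉ D <;> simp [h]
  -- the set of "moved" boxes
  set M : Finset {x : ℕ × ℕ // x ∈ D} := Finset.univ.filter (fun b : {x : ℕ × ℕ // x ∈ D} => b.val.1 = i1 ∧ (i2, b.val.2) ∉ D)
    with hM
  -- find b moved with σ b not moved
  have hmain : ∃ b : {x : ℕ × ℕ // x ∈ D}, (b.val.1 = i1 ∧ (i2, b.val.2) ∉ D) ∧ (i2, (σ b).val.2) ∈ D := by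
    by_contra hcon
    push_neg at hcon
    have hMσ : ∀ b ∈ M, σ b ∈ M := by
      intro b hb
      rw [hM, Finset.mem_filter] at hb ⊢
      refine ⟨Finset.mem_univ _, ?_, hcon b hb.2⟩
      rw [hσR b]; exact hb.2.1
    have himg : Finset.image σ M = M := by
      apply Finset.eq_of_subset_of_card_le
      · intro x hx
        rcases Finset.mem_image.mp hx with ⟨b, hb, rfl⟩
        exact hMσ b hb
      · rw [Finset.card_image_of_injective _ σ.injective]
    have hback : ∀ b : {x : ℕ × ℕ // x ∈ D}, σ b ∈ M → b ∈ M := by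
      intro b hb
      rw [← himg] at hb
      rcases Finset.mem_image.mp hb with ⟨a, ha, hab⟩
      rwa [← σ.injective hab]
    apply hσRA
    intro b
    rw [hrow, hrow]
    by_cases hb : b.val.1 = i1 ∧ (i2, b.val.2) ∉ D
    · have : σ b ∈ M := hMσ b (by rw [hM, Finset.mem_filter]; exact ⟨Finset.mem_univ _, hb⟩)
      rw [hM, Finset.mem_filter] at this
      rw [if_pos this.2, if_pos hb]
    · have : σ b ∉ M := fun h => hb (by
        have := hback b h
        rw [hM, Finset.mem_filter] at this
        exact this.2)
      rw [hM, Finset.mem_filter] at this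
      have hnb : ¬((σ b).val.1 = i1 ∧ (i2, (σ b).val.2) ∉ D) := fun h =>
        this ⟨Finset.mem_univ _, h⟩
      rw [if_neg hnb, if_neg hb, hσR]
  obtain ⟨b, hbmoved, hv⟩ := hmain
  -- build the transpositions
  set u : {x : ℕ × ℕ // x ∈ D} := σ b with hu
  set v : {x : ℕ × ℕ // x ∈ D} := ⟨(i2, (σ b).val.2), hv⟩ with hvdef
  have hucol : u.val.2 = v.val.2 := rfl
  have huv : u ≠ v := by
    intro h
    have : u.val.1 = v.val.1 := by rw [h]
    rw [hu] at this
    rw [hσR b, hbmoved.1] at this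
    exact h12 this
  set t : Equiv.Perm {x : ℕ × ℕ // x ∈ D} := Equiv.swap u v with htdef
  set t' : Equiv.Perm {x : ℕ × ℕ // x ∈ D} := Equiv.swap (σ⁻¹ u) (σ⁻¹ v) with ht'def
  have hcomm : t * σ = σ * t' := Equiv.swap_mul_eq_mul_swap σ u v
  -- t preserves columns
  have htcol : ∀ x : {x : ℕ × ℕ // x ∈ D}, ((t x).val.2 : ℕ) = x.val.2 :=
    swap_pres (fun x : {x : ℕ × ℕ // x ∈ D} => x.val.2) u v hucol
  -- t' preserves φ-rows
  have hrowinv : ∀ x : {x : ℕ × ℕ // x ∈ D}, (σ⁻¹ x).val.1 = x.val.1 := by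
    intro x
    conv_rhs => rw [← σ.apply_symm_apply x]
    exact (hσR (σ⁻¹ x)).symm
  have hφu : (φ (σ⁻¹ u)).val.1 = i2 := by
    have : σ⁻¹ u = b := by rw [hu]; exact σ.symm_apply_apply b
    rw [this, hrow, if_pos hbmoved]
  have hφv : (φ (σ⁻¹ v)).val.1 = i2 := by
    rw [hrow]
    have h1 : (σ⁻¹ v).val.1 = i2 := by rw [hrowinv]
    rw [if_neg (fun h => h12 ((h1 ▸ h.1 : (i2 : ℕ) = i1)).symm), h1]
  have ht'row : ∀ x : {x : ℕ × ℕ // x ∈ D}, (φ (t' x)).val.1 = (φ x).val.1 :=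
    swap_pres (fun x : {x : ℕ × ℕ // x ∈ D} => (φ x).val.1) _ _ (hφu.trans hφv.symm)
  -- sign of t
  have hsign : ((Equiv.Perm.sign t : ℤ) : ℂ) = -1 := by
    rw [Equiv.Perm.sign_swap huv]; norm_num
  -- algebra
  set C := Csum (fun b : {x : ℕ × ℕ // x ∈ D} => b.val.2) with hC
  set R := Rsum (fun b : {x : ℕ × ℕ // x ∈ D} => (φ b).val.1) with hR
  have h1 : C * MonoidAlgebra.single t (((Equiv.Perm.sign t : ℤ) : ℂ)) = C :=
    Csum_mul_single _ t htcol
  have h2 : MonoidAlgebra.single t' (1 : ℂ) * R = R := single_mul_Rsum _ t' ht'row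
  have key : C * MonoidAlgebra.single σ (1 : ℂ) * R
      = -(C * MonoidAlgebra.single σ (1 : ℂ) * R) := by
    conv_lhs => rw [← h1, ← h2]
    rw [hsign]
    calc C * MonoidAlgebra.single t (-1 : ℂ) * MonoidAlgebra.single σ (1 : ℂ) *
          (MonoidAlgebra.single t' (1 : ℂ) * R)
        = C * (MonoidAlgebra.single t (-1 : ℂ) * MonoidAlgebra.single σ (1 : ℂ) *
            MonoidAlgebra.single t' (1 : ℂ)) * R := by simp only [mul_assoc]
      _ = C * (MonoidAlgebra.single (t * σ * t') (-1 : ℂ)) * R := by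
            rw [MonoidAlgebra.single_mul_single, MonoidAlgebra.single_mul_single]
            norm_num
      _ = C * (MonoidAlgebra.single (σ * t' * t') (-1 : ℂ)) * R := by rw [hcomm]
      _ = C * (MonoidAlgebra.single σ (-1 : ℂ)) * R := by
            rw [mul_assoc σ t' t']
            have : t' * t' = 1 := by
              rw [ht'def, Equiv.swap_mul_self]
            rw [this, mul_one]
      _ = -(C * MonoidAlgebra.single σ (1 : ℂ) * R) := by
            have hneg : MonoidAlgebra.single σ (-1 : ℂ) =
                -MonoidAlgebra.single σ (1 : ℂ) := by
              rw [← MonoidAlgebra.single_neg]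
            rw [hneg, mul_neg, neg_mul]
  have h2X : C * MonoidAlgebra.single σ (1 : ℂ) * R +
      C * MonoidAlgebra.single σ (1 : ℂ) * R = 0 := by
    nth_rewrite 1 [key]; exact neg_add_cancel _
  have h2s : (2 : ℂ) • (C * MonoidAlgebra.single σ (1 : ℂ) * R) = 0 := by
    rw [two_smul]; exact h2X
  rcases smul_eq_zero.mp h2s with h | h
  · exact absurd h two_ne_zero
  · exact h
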